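/- Let (Gᵢ, pᵢ) be an inverse sequence of groups and Hᵢ ≤ Gᵢ subgroups with pᵢ(Hᵢ₊₁) ⊆ Hᵢ for all i. If the induced inverse sequence of pointed coset spaces Gᵢ/Hᵢ (pointed at the coset Hᵢ) satisfies the Mittag-Leffler condition, then the inclusion-induced map of pointed sets lim¹ Hᵢ → lim¹ Gᵢ is surjective. -/
import Mathlib


/-- An inverse sequence of groups `⋯ → G₂ → G₁ → G₀`, presented by its compatible
composite bonding homomorphisms `bond h : G j →* G i` for `i ≤ j`; the one-step
bonding maps `pᵢ` are `bond (Nat.le_succ i) : G (i+1) →* G i`. -/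
structure GroupInvSeq (G : ℕ → Type) [∀ i, Group (G i)] : Type where
  bond : ∀ ⦃i j : ℕ⦄, i ≤ j → (G j →* G i)
  bond_refl : ∀ i, bond (le_refl i) = MonoidHom.id (G i)
  bond_comp : ∀ ⦃i j k : ℕ⦄ (hij : i ≤ j) (hjk : j ≤ k),
    (bond hij).comp (bond hjk) = bond (hij.trans hjk)

namespace GroupInvSeq

variable {G : ℕ → Type} [∀ i, Group (G i)]

/-- The orbit relation on `∏ᵢ Gᵢ` of the right action
`(g₀,g₁,…)·(x₀,x₁,…) = (x₀⁻¹g₀p₀(x₁), x₁⁻¹g₁p₁(x₂), …)`; its orbit set is `lim¹`. -/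
def lim1Rel (S : GroupInvSeq G) (g g' : ∀ i, G i) : Prop :=
  ∃ x : ∀ i, G i, ∀ i, g' i = (x i)⁻¹ * g i * S.bond (Nat.le_succ i) (x (i + 1))

/-- The derived limit `lim¹` of an inverse sequence of groups: the orbit set of the
action above, pointed at the class of the identity. -/
def lim1 (S : GroupInvSeq G) : Type :=
  Quot S.lim1Rel

/-- The corresponding orbit relation for the inverse sequence of subgroups
`Hᵢ ≤ Gᵢ` (with the restricted bonding maps); its orbit set is `lim¹ Hᵢ`. -/
def lim1RelSub (S : GroupInvSeq G) (H : ∀ i, Subgroup (G i))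
    (h h' : ∀ i, ↥(H i)) : Prop :=
  ∃ x : ∀ i, ↥(H i), ∀ i,
    (h' i : G i) = (x i : G i)⁻¹ * (h i : G i) *
      S.bond (Nat.le_succ i) (x (i + 1) : G (i + 1))

/-- The map `lim¹ Hᵢ → lim¹ Gᵢ` induced by the inclusions `Hᵢ ↪ Gᵢ`, sending the
class of `(h₀,h₁,…)` to its class in `lim¹ Gᵢ`. -/
def lim1incl (S : GroupInvSeq G) (H : ∀ i, Subgroup (G i)) :
    Quot (S.lim1RelSub H) → S.lim1 :=
  Quot.lift (fun h => Quot.mk S.lim1Rel fun i => (h i : G i))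
    (fun h h' hr => by
      obtain ⟨x, hx⟩ := hr
      exact Quot.sound ⟨fun i => (x i : G i), fun i => hx i⟩)

end GroupInvSeq


namespace Lim1Aux

variable {G : ℕ → Type} [∀ i, Group (G i)] (S : GroupInvSeq G)

lemma bond_apply_comp ⦃i j k : ℕ⦄ (hij : i ≤ j) (hjk : j ≤ k) (z : G k) :
    S.bond hij (S.bond hjk z) = S.bond (hij.trans hjk) z :=
  DFunLike.congr_fun (S.bond_comp hij hjk) z

lemma bond_apply_refl (i : ℕ) (h : i ≤ i) (x : G i) : S.bond h x = x := by
  have : S.bond (le_refl i) x = x := by rw [S.bond_refl]; rfl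
  exact this

variable (g : ∀ i, G i)

/-- Twisting products `cc i j = g i · p(g (i+1)) · … · bond (g (j-1))`. -/
def cc (i : ℕ) : ℕ → G i
  | 0 => 1
  | (j+1) => if h : i ≤ j then cc i j * S.bond h (g j) else 1

lemma cc_self (i : ℕ) : cc S g i i = 1 := by
  cases i with
  | zero => rfl
  | succ n => simp [cc, Nat.not_succ_le_self n]

lemma cc_succ {i j : ℕ} (h : i ≤ j) : cc S g i (j+1) = cc S g i j * S.bond h (g j) := by
  simp [cc, h]

lemma cc_succ_self (i : ℕ) : cc S g i (i+1) = g i := by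
  rw [cc_succ S g (le_refl i), cc_self, one_mul, bond_apply_refl]

lemma cc_comp {i j k : ℕ} (hij : i ≤ j) (hjk : j ≤ k) :
    cc S g i k = cc S g i j * S.bond hij (cc S g j k) := by
  induction k, hjk using Nat.le_induction with
  | base => rw [cc_self, map_one, mul_one]
  | succ n hn ih =>
    rw [cc_succ S g (hij.trans hn), cc_succ S g hn, map_mul, ih,
      bond_apply_comp S hij hn, mul_assoc]

lemma exists_chain {α : ℕ → Type} (P : ∀ i, α i → Prop) (R : ∀ i, α (i+1) → α i → Prop)
    (h0 : ∃ a, P 0 a) (hstep : ∀ i a, P i a → ∃ b, P (i+1) b ∧ R i b a) :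
    ∃ f : ∀ i, α i, ∀ i, R i (f (i+1)) (f i) := by
  choose b hb hr using hstep
  obtain ⟨a0, ha0⟩ := h0
  let F : ∀ i, {x : α i // P i x} := fun i =>
    Nat.rec ⟨a0, ha0⟩ (fun n p => ⟨b n p.1 p.2, hb n p.1 p.2⟩) i
  exact ⟨fun i => (F i).1, fun i => hr i (F i).1 (F i).2⟩

end Lim1Aux

open Lim1Aux in
open GroupInvSeq in
/-- If the induced inverse sequence of pointed coset spaces `Gᵢ/Hᵢ` satisfies the
Mittag-Leffler condition, then the inclusion-induced map `lim¹ Hᵢ → lim¹ Gᵢ` is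
surjective. -/
theorem lim1incl_surjective_of_coset_mittagLeffler
    {G : ℕ → Type} [∀ i, Group (G i)]
    (S : GroupInvSeq G) (H : ∀ i, Subgroup (G i))
    (hH : ∀ i, ∀ x ∈ H (i + 1), S.bond (Nat.le_succ i) x ∈ H i)
    (hML : ∀ i, ∃ j, ∃ hij : i < j, ∀ k, ∀ hjk : j < k,
      Set.range (fun g : G k =>
        (QuotientGroup.mk (S.bond (hij.le.trans hjk.le) g) : G i ⧸ H i)) =
      Set.range (fun g : G j =>
        (QuotientGroup.mk (S.bond hij.le g) : G i ⧸ H i))) :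
    Function.Surjective (lim1incl S H) := by
  intro ξ0
  obtain ⟨g, rfl⟩ := Quot.exists_rep ξ0
  choose j hij hspec using hML
  -- the eventual-image predicate on `G i ⧸ H i` for the twisted system
  set Ev : ∀ i, (G i ⧸ H i) → Prop := fun i ξ =>
    ∃ y : G (j i), ξ = QuotientGroup.mk (cc S g i (j i) * S.bond (hij i).le y) with hEv
  -- stability of the twisted eventual image
  have stable : ∀ i k (hk : j i < k) (ξ : G i ⧸ H i), Ev i ξ ↔
      ∃ z : G k, ξ = QuotientGroup.mk (cc S g i k *
        S.bond ((hij i).le.trans hk.le) z) := by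
    intro i k hk ξ
    have h1 : i ≤ j i := (hij i).le
    have h2 : j i ≤ k := hk.le
    constructor
    · rintro ⟨y, rfl⟩
      have hmem : (QuotientGroup.mk (S.bond h1 ((cc S g (j i) k)⁻¹ * y)) : G i ⧸ H i)
          ∈ Set.range (fun w : G (j i) =>
            (QuotientGroup.mk (S.bond (hij i).le w) : G i ⧸ H i)) := ⟨_, rfl⟩
      rw [← hspec i k hk] at hmem
      obtain ⟨z, hz⟩ := hmem
      refine ⟨z, ?_⟩
      rw [QuotientGroup.eq] at hz ⊢
      have key : (cc S g i (j i) * S.bond h1 y)⁻¹ *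
          (cc S g i k * S.bond ((hij i).le.trans hk.le) z) =
          ((S.bond ((hij i).le.trans hk.le) z)⁻¹ *
            S.bond h1 ((cc S g (j i) k)⁻¹ * y))⁻¹ := by
        rw [cc_comp S g h1 h2]
        simp [map_mul, map_inv, mul_assoc]
      rw [key]
      exact inv_mem hz
    · rintro ⟨z, rfl⟩
      refine ⟨cc S g (j i) k * S.bond h2 z, ?_⟩
      congr 1
      rw [map_mul, ← mul_assoc, ← cc_comp S g h1 h2,
        bond_apply_comp S h1 h2 z]
  -- step surjectivity between consecutive eventual images
  have step : ∀ i (x : G i), Ev i (QuotientGroup.mk x) →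
      ∃ x' : G (i+1), Ev (i+1) (QuotientGroup.mk x') ∧
        (QuotientGroup.mk x : G i ⧸ H i) =
          QuotientGroup.mk (g i * S.bond (Nat.le_succ i) x') := by
    intro i x hx
    set k := max (j i) (j (i+1)) + 1 with hkdef
    have hk1 : j i < k := Nat.lt_succ_of_le (le_max_left _ _)
    have hk2 : j (i+1) < k := Nat.lt_succ_of_le (le_max_right _ _)
    obtain ⟨z, hz⟩ := (stable i k hk1 _).mp hx
    have h' : i + 1 ≤ k := (hij (i+1)).le.trans hk2.le
    refine ⟨cc S g (i+1) k * S.bond h' z, ?_, ?_⟩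
    · exact (stable (i+1) k hk2 _).mpr ⟨z, rfl⟩
    · rw [hz]
      congr 1
      rw [map_mul, ← mul_assoc, ← cc_succ_self S g i, ← cc_comp S g (Nat.le_succ i) h',
        bond_apply_comp S (Nat.le_succ i) h' z]
  -- build the thread by dependent choice
  have h0 : ∃ a : G 0, Ev 0 (QuotientGroup.mk a) :=
    ⟨cc S g 0 (j 0) * S.bond (hij 0).le 1, ⟨1, rfl⟩⟩
  obtain ⟨f, hf⟩ := exists_chain (fun i (x : G i) => Ev i (QuotientGroup.mk x))
    (fun i x' x => (QuotientGroup.mk x : G i ⧸ H i) =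
      QuotientGroup.mk (g i * S.bond (Nat.le_succ i) x')) h0 step
  have hmem : ∀ i, (f i)⁻¹ * g i * S.bond (Nat.le_succ i) (f (i+1)) ∈ H i := by
    intro i
    have := (QuotientGroup.eq).mp (hf i)
    rwa [← mul_assoc] at this
  refine ⟨Quot.mk _ (fun i => (⟨_, hmem i⟩ : H i)), ?_⟩
  show Quot.mk S.lim1Rel (fun i => (f i)⁻¹ * g i * S.bond (Nat.le_succ i) (f (i+1)))
    = Quot.mk S.lim1Rel g
  exact (Quot.sound ⟨f, fun i => rfl⟩).symm
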